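/- For every integer a and every ε ∈ {1, −1}, the polynomial x⁴ + 162·a·x² + 6399·ε is irreducible over ℚ. -/

import Mathlib

open Polynomial

private lemma lemA (a v ε : ℤ) (hε : ε = 1 ∨ ε = -1) : v ^ 2 ≠ 81 * a ^ 2 - 79 * ε := by
  intro h
  have hd : (9 * a - v) * (9 * a + v) = 79 * ε := by linear_combination -h
  have hdvd : (9 * a - v) ∣ (79 : ℤ) := by
    rcases hε with rfl | rfl
    · exact ⟨9 * a + v, by linarith⟩
    · exact (dvd_neg.mp ⟨9 * a + v, by linarith⟩)
  have hna : (9 * a - v).natAbs ∣ 79 := by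
    have := Int.natAbs_dvd_natAbs.mpr hdvd
    simpa using this
  have hp : Nat.Prime 79 := by norm_num
  have := hp.eq_one_or_self_of_dvd _ hna
  have hdv : 9 * a - v = 1 ∨ 9 * a - v = -1 ∨ 9 * a - v = 79 ∨ 9 * a - v = -79 := by omega
  rcases hε with rfl | rfl <;>
    rcases hdv with h1 | h1 | h1 | h1 <;> rw [h1] at hd <;> omega

private lemma lemB (a t ε : ℤ) (hε : ε = 1 ∨ ε = -1) : t ^ 2 ≠ 6561 * a ^ 2 - 6399 * ε := by
  intro h
  have hp : Prime (3 : ℤ) := by norm_num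
  have h3 : (3 : ℤ) ∣ t := hp.dvd_of_dvd_pow (n := 2) ⟨2187 * a ^ 2 - 2133 * ε, by linarith⟩
  obtain ⟨u, rfl⟩ := h3
  have h3' : (3 : ℤ) ∣ u := hp.dvd_of_dvd_pow (n := 2) ⟨243 * a ^ 2 - 237 * ε, by nlinarith⟩
  obtain ⟨v, rfl⟩ := h3'
  exact lemA a v ε hε (by nlinarith)

private lemma lemC (c ε : ℤ) (hε : ε = 1 ∨ ε = -1) : c ^ 2 ≠ 6399 * ε := by
  intro h
  rcases hε with rfl | rfl
  · rcases Int.even_or_odd c with ⟨k, rfl⟩ | ⟨k, rfl⟩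
    · have : (4 : ℤ) ∣ 6399 := ⟨k ^ 2, by linear_combination -h⟩
      norm_num at this
    · have : (4 : ℤ) ∣ 6398 := ⟨k ^ 2 + k, by linear_combination -h⟩
      norm_num at this
  · nlinarith [sq_nonneg c]

private lemma quad_eq {p : ℤ[X]} (hm : p.Monic) (hd : p.natDegree = 2) :
    p = X ^ 2 + C (p.coeff 1) * X + C (p.coeff 0) := by
  have h2 : p.coeff 2 = 1 := by
    have := hm.coeff_natDegree
    rwa [hd] at this
  conv_lhs => rw [p.as_sum_range' 3 (by omega)]
  rw [Finset.sum_range_succ, Finset.sum_range_succ, Finset.sum_range_one, h2,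
    ← C_mul_X_pow_eq_monomial, ← C_mul_X_pow_eq_monomial, ← C_mul_X_pow_eq_monomial, C_1]
  ring

private lemma no_lin_factor (a ε : ℤ) (hε : ε = 1 ∨ ε = -1) (g : ℤ[X])
    (hdvd : g ∣ (X ^ 4 + C (162 * a) * X ^ 2 + C (6399 * ε) : ℤ[X]))
    (hdeg : g.natDegree = 1) (hlc : IsUnit g.leadingCoeff) : False := by
  set c1 := g.coeff 1 with hc1
  set c0 := g.coeff 0 with hc0
  have hlc1 : c1 = g.leadingCoeff := by rw [leadingCoeff, hdeg]
  have hc1u : c1 = 1 ∨ c1 = -1 := by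
    rw [hlc1]; exact Int.isUnit_iff.mp hlc
  have hgeq : g = C c1 * X + C c0 := eq_X_add_C_of_natDegree_le_one (by omega)
  set r : ℤ := -c0 * c1 with hr
  have hgr : g.eval r = 0 := by
    rw [hgeq]
    rcases hc1u with h1 | h1 <;> simp [h1, hr]
  obtain ⟨k, hk⟩ := hdvd
  have heval : r ^ 4 + 162 * a * r ^ 2 + 6399 * ε = 0 := by
    have := congrArg (Polynomial.eval r) hk
    simpa [hgr] using this
  exact lemB a (r ^ 2 + 81 * a) ε hε (by linear_combination heval)

private lemma monic_f (a ε : ℤ) : (X ^ 4 + C (162 * a) * X ^ 2 + C (6399 * ε) : ℤ[X]).Monic := by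
  rw [add_assoc]
  apply monic_X_pow_add
  apply lt_of_le_of_lt (degree_add_le _ _)
  simp only [max_lt_iff]
  constructor
  · calc degree (C (162 * a) * X ^ 2 : ℤ[X]) ≤ 0 + 2 := by
          apply le_trans (degree_mul_le _ _)
          exact add_le_add degree_C_le (by simp)
        _ < 4 := by norm_num
  · exact lt_of_le_of_lt degree_C_le (by norm_num)

private lemma irred_int (a ε : ℤ) (hε : ε = 1 ∨ ε = -1) :
    Irreducible (X ^ 4 + C (162 * a) * X ^ 2 + C (6399 * ε) : ℤ[X]) := by
  set f : ℤ[X] := X ^ 4 + C (162 * a) * X ^ 2 + C (6399 * ε) with hf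
  have hm : f.Monic := monic_f a ε
  have hdegf : f.natDegree = 4 := by
    rw [hf]
    compute_degree!
  constructor
  · intro hu
    have := natDegree_eq_zero_of_isUnit hu
    omega
  intro g h hgh
  by_contra hc
  push_neg at hc
  obtain ⟨hgu, hhu⟩ := hc
  have hf0 : f ≠ 0 := hm.ne_zero
  have hg0 : g ≠ 0 := by rintro rfl; simp at hgh; exact hf0 hgh
  have hh0 : h ≠ 0 := by rintro rfl; simp at hgh; exact hf0 hgh
  have hlc : g.leadingCoeff * h.leadingCoeff = 1 := by
    rw [← leadingCoeff_mul, ← hgh]; exact hm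
  have hglc : IsUnit g.leadingCoeff := IsUnit.of_mul_eq_one _ hlc
  have hhlc : IsUnit h.leadingCoeff := IsUnit.of_mul_eq_one _ (by rw [mul_comm]; exact hlc)
  have hdsum : g.natDegree + h.natDegree = 4 := by
    rw [← natDegree_mul hg0 hh0, ← hgh, hdegf]
  have hgd0 : g.natDegree ≠ 0 := by
    intro h0
    apply hgu
    rw [eq_C_of_natDegree_eq_zero h0]
    apply isUnit_C.mpr
    have : g.leadingCoeff = g.coeff 0 := by rw [leadingCoeff, h0]
    rwa [this] at hglc
  have hhd0 : h.natDegree ≠ 0 := by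
    intro h0
    apply hhu
    rw [eq_C_of_natDegree_eq_zero h0]
    apply isUnit_C.mpr
    have : h.leadingCoeff = h.coeff 0 := by rw [leadingCoeff, h0]
    rwa [this] at hhlc
  -- case on degrees
  rcases (show g.natDegree = 1 ∨ h.natDegree = 1 ∨ (g.natDegree = 2 ∧ h.natDegree = 2) by omega)
    with hd1 | hd1 | ⟨hd2, hd2'⟩
  · exact no_lin_factor a ε hε g (Dvd.intro _ hgh.symm) hd1 hglc
  · exact no_lin_factor a ε hε h (Dvd.intro_left _ hgh.symm) hd1 hhlc
  · -- two quadratics; normalize sign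
    obtain ⟨G, H, hGH, hGm, hHm, hGd, hHd⟩ :
        ∃ G H : ℤ[X], f = G * H ∧ G.Monic ∧ H.Monic ∧ G.natDegree = 2 ∧ H.natDegree = 2 := by
      rcases Int.isUnit_iff.mp hglc with h1 | h1
      · have h2 : h.leadingCoeff = 1 := by rw [h1] at hlc; linarith
        exact ⟨g, h, hgh, h1, h2, hd2, hd2'⟩
      · have h2 : h.leadingCoeff = -1 := by rw [h1] at hlc; linarith
        refine ⟨-g, -h, by rw [hgh]; ring, ?_, ?_, by simp [hd2], by simp [hd2']⟩
        · unfold Monic; rw [leadingCoeff_neg, h1]; ring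
        · unfold Monic; rw [leadingCoeff_neg, h2]; ring
    obtain ⟨b, c, hGbc⟩ : ∃ b c, G = X ^ 2 + C b * X + C c := ⟨_, _, quad_eq hGm hGd⟩
    obtain ⟨d, e, hHde⟩ : ∃ d e, H = X ^ 2 + C d * X + C e := ⟨_, _, quad_eq hHm hHd⟩
    have hE : f = (X ^ 2 + C b * X + C c) * (X ^ 2 + C d * X + C e) := by
      rw [hGH, hGbc, hHde]
    have hE' : (X ^ 4 + C (162 * a) * X ^ 2 + C (6399 * ε) : ℤ[X]) =
        X ^ 4 + C (b + d) * X ^ 3 + C (c + e + b * d) * X ^ 2 + C (b * e + c * d) * X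
          + C (c * e) := by
      rw [← hf, hE]; simp only [C_add, C_mul]; ring
    have e3 : (0 : ℤ) = b + d := by
      have := congrArg (fun p => Polynomial.coeff p 3) hE'
      simp only [coeff_add, coeff_C_mul, coeff_X_pow, coeff_X, coeff_C] at this
      norm_num at this
      linarith [this]
    have e2 : 162 * a = c + e + b * d := by
      have := congrArg (fun p => Polynomial.coeff p 2) hE'
      simp only [coeff_add, coeff_C_mul, coeff_X_pow, coeff_X, coeff_C] at this
      norm_num at this
      linarith [this]
    have e1 : (0 : ℤ) = b * e + c * d := by
      have := congrArg (fun p => Polynomial.coeff p 1) hE'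
      simp only [coeff_add, coeff_C_mul, coeff_X_pow, coeff_X, coeff_C] at this
      norm_num at this
      linarith [this]
    have e0 : 6399 * ε = c * e := by
      have := congrArg (fun p => Polynomial.coeff p 0) hE'
      simp only [coeff_add, coeff_C_mul, coeff_X_pow, coeff_X, coeff_C] at this
      norm_num at this
      linarith [this]
    have hbd : d = -b := by omega
    have hsplit : b = 0 ∨ e = c := by
      rcases mul_eq_zero.mp (show b * (e - c) = 0 by rw [hbd] at e1; linarith [e1]) with h' | h'
      · exact Or.inl h'
      · right; linarith
    rcases hsplit with rfl | hec
    · -- b = 0, d = 0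
      have hce : c + e = 162 * a := by rw [hbd] at e2; linarith
      have hq : c * e = 6399 * ε := e0.symm
      obtain ⟨t, ht⟩ : (2 : ℤ) ∣ (c - e) := by omega
      have h4 : 4 * t ^ 2 = 26244 * a ^ 2 - 25596 * ε := by
        linear_combination (-(c - e + 2 * t)) * ht + (c + e + 162 * a) * hce - 4 * hq
      exact lemB a t ε hε (by linarith)
    · -- e = c
      rw [hec] at e0
      exact lemC c ε hε (by linear_combination -e0)

theorem stmt_16 (a : ℤ) (ε : ℤ) (hε : ε = 1 ∨ ε = -1) :
    Irreducible ((Polynomial.X ^ 4 + Polynomial.C ((162 * a : ℤ) : ℚ) * Polynomial.X ^ 2 +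
      Polynomial.C ((6399 * ε : ℤ) : ℚ)) : Polynomial ℚ) := by
  have hm := monic_f a ε
  have key := (hm.irreducible_iff_irreducible_map_fraction_map (K := ℚ)).mp (irred_int a ε hε)
  have hmap : ((X ^ 4 + C (162 * a) * X ^ 2 + C (6399 * ε) : ℤ[X]).map (algebraMap ℤ ℚ)) =
      (Polynomial.X ^ 4 + Polynomial.C ((162 * a : ℤ) : ℚ) * Polynomial.X ^ 2 +
        Polynomial.C ((6399 * ε : ℤ) : ℚ)) := by
    simp only [Polynomial.map_add, Polynomial.map_mul, Polynomial.map_pow, Polynomial.map_X,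
      Polynomial.map_C, algebraMap_int_eq, Int.coe_castRingHom]
  rwa [hmap] at key
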